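/- Fix an integer m ≥ 1 and a real p with 1 ≤ p < ∞. Let α_{nk} (n, k ≥ 1) be a doubly indexed family of reals (α_{nk} = log a_{nk} for an infinite matrix A of geometric real numbers), and define b_{ik} = (1/i) · (Δ^{m-1}α_{1k} − Δ^{m-1}α_{(i+1)k}), where Δ^{m-1}α_{nk} = ∑_{v=0}^{m-1} (−1)^v · binom(m-1,v) · α_{(n+v)k}. Then the following are equivalent: (I) for every convergent real sequence t, the series A_n(t) = ∑_{k=1}^∞ α_{nk} t_k converges for each n and ∑_{i=1}^∞ |(1/i) ∑_{n=1}^i Δ^m A_n(t)|^p < ∞; (II) (i) ∑_{k=1}^∞ |α_{nk}| < ∞ for each n, and (ii) for every convergent real sequence t, the series B_i(t) = ∑_{k=1}^∞ b_{ik} t_k converges for each i and ∑_{i=1}^∞ |B_i(t)|^p < ∞. (In the paper's notation: A ∈ (c^G, C_p^G(Δ_G^m)) if and only if the rows of A are in ℓ_1^G and B ∈ (c^G, ℓ_p^G).) -/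
import Mathlib


/-- Classical `m`-th order forward difference
`Δ^m y_k = ∑_{v=0}^m (−1)^v C(m,v) y_{k+v}`. -/
noncomputable def fdiff (m : ℕ) (y : ℕ → ℝ) (k : ℕ) : ℝ :=
  ∑ v ∈ Finset.range (m + 1), (-1 : ℝ) ^ v * (m.choose v : ℝ) * y (k + v)

/-- The associated matrix
`b_{ik} = (1/i)·(Δ^{m-1}α_{1k} − Δ^{m-1}α_{(i+1)k})`, where `Δ^{m-1}` acts on
the row index. -/
noncomputable def bmat (m : ℕ) (α : ℕ → ℕ → ℝ) (i k : ℕ) : ℝ :=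
  (1 / (i : ℝ)) *
    (fdiff (m - 1) (fun n => α n k) 1 - fdiff (m - 1) (fun n => α n k) (i + 1))

lemma fdiff_succ (m : ℕ) (y : ℕ → ℝ) (k : ℕ) :
    fdiff (m + 1) y k = fdiff m y k - fdiff m y (k + 1) := by
  unfold fdiff
  rw [Finset.sum_range_succ' (n := m + 1)]
  have h1 : ∀ v : ℕ, (((m+1).choose (v+1) : ℝ)) = m.choose v + m.choose (v+1) := by
    intro v; exact_mod_cast Nat.choose_succ_succ m v
  have h2 : ∑ v ∈ Finset.range (m + 1), (-1:ℝ) ^ (v+1) * ((m+1).choose (v+1) : ℝ) * y (k + (v+1))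
      = ∑ v ∈ Finset.range (m + 1), ((-1:ℝ) ^ (v+1) * (m.choose (v+1) : ℝ) * y (k + (v+1))
          - (-1:ℝ) ^ v * (m.choose v : ℝ) * y ((k+1) + v)) := by
    refine Finset.sum_congr rfl fun v _ => ?_
    rw [h1]
    have : (k+1)+v = k + (v+1) := by omega
    rw [this]; ring
  rw [h2, Finset.sum_sub_distrib]
  have h3 : ∑ v ∈ Finset.range (m + 1), (-1:ℝ) ^ (v+1) * (m.choose (v+1) : ℝ) * y (k + (v+1))
      = ∑ v ∈ Finset.range m, (-1:ℝ) ^ (v+1) * (m.choose (v+1) : ℝ) * y (k + (v+1)) := by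
    rw [Finset.sum_range_succ]; simp
  rw [h3]
  have h4 : ∑ v ∈ Finset.range (m + 1), (-1:ℝ) ^ v * (m.choose v : ℝ) * y (k + v)
      = ∑ v ∈ Finset.range m, (-1:ℝ) ^ (v+1) * (m.choose (v+1) : ℝ) * y (k + (v+1))
        + (-1:ℝ) ^ 0 * (m.choose 0 : ℝ) * y (k + 0) := Finset.sum_range_succ' _ _
  rw [h4]
  simp
  ring

lemma tele (g : ℕ → ℝ) (i : ℕ) :
    ∑ n ∈ Finset.Icc 1 i, (g n - g (n + 1)) = g 1 - g (i + 1) := by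
  induction i with
  | zero => simp
  | succ j ih =>
      rw [Finset.sum_Icc_succ_top (Nat.succ_le_succ (Nat.zero_le j)), ih]; ring

lemma keylemma (m : ℕ) (α : ℕ → ℕ → ℝ) (t : ℕ → ℝ)
    (hrow : ∀ n, 1 ≤ n → Summable (fun k => α n (k + 1) * t (k + 1))) (i : ℕ) (hi : 1 ≤ i) :
    Summable (fun k => bmat (m + 1) α i (k + 1) * t (k + 1)) ∧
    ∑' k, bmat (m + 1) α i (k + 1) * t (k + 1) =
      (1 / (i : ℝ)) * ∑ n ∈ Finset.Icc 1 i,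
        fdiff (m + 1) (fun j => ∑' k, α j (k + 1) * t (k + 1)) n := by
  set A : ℕ → ℝ := fun j => ∑' k, α j (k + 1) * t (k + 1) with hA
  have hpt : ∀ k, bmat (m + 1) α i (k + 1) * t (k + 1) =
      (1 / (i : ℝ)) * ∑ v ∈ Finset.range (m + 1),
        ((-1:ℝ) ^ v * (m.choose v : ℝ) * (α (1 + v) (k + 1) * t (k + 1))
          - (-1:ℝ) ^ v * (m.choose v : ℝ) * (α ((i + 1) + v) (k + 1) * t (k + 1))) := by
    intro k
    simp only [bmat, fdiff, Nat.add_sub_cancel, sub_mul, Finset.sum_mul, mul_assoc,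
      Finset.sum_sub_distrib]
  have hsummand : ∀ v ∈ Finset.range (m + 1), Summable (fun k =>
      (-1:ℝ) ^ v * (m.choose v : ℝ) * (α (1 + v) (k + 1) * t (k + 1))
        - (-1:ℝ) ^ v * (m.choose v : ℝ) * (α ((i + 1) + v) (k + 1) * t (k + 1))) := by
    intro v _
    exact ((hrow (1 + v) (by omega)).mul_left _).sub ((hrow ((i + 1) + v) (by omega)).mul_left _)
  have hS : Summable (fun k => ∑ v ∈ Finset.range (m + 1),
      ((-1:ℝ) ^ v * (m.choose v : ℝ) * (α (1 + v) (k + 1) * t (k + 1))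
        - (-1:ℝ) ^ v * (m.choose v : ℝ) * (α ((i + 1) + v) (k + 1) * t (k + 1)))) :=
    (hasSum_sum fun v hv => (hsummand v hv).hasSum).summable
  constructor
  · exact (hS.mul_left _).congr fun k => (hpt k).symm
  · rw [tsum_congr hpt, tsum_mul_left, Summable.tsum_finsetSum hsummand]
    have hterm : ∀ v ∈ Finset.range (m + 1),
        ∑' k, ((-1:ℝ) ^ v * (m.choose v : ℝ) * (α (1 + v) (k + 1) * t (k + 1))
          - (-1:ℝ) ^ v * (m.choose v : ℝ) * (α ((i + 1) + v) (k + 1) * t (k + 1)))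
        = (-1:ℝ) ^ v * (m.choose v : ℝ) * A (1 + v)
          - (-1:ℝ) ^ v * (m.choose v : ℝ) * A ((i + 1) + v) := by
      intro v _
      rw [Summable.tsum_sub ((hrow (1 + v) (by omega)).mul_left _)
        ((hrow ((i + 1) + v) (by omega)).mul_left _), tsum_mul_left, tsum_mul_left]
    rw [Finset.sum_congr rfl hterm]
    congr 1
    have htel : ∑ n ∈ Finset.Icc 1 i, fdiff (m + 1) A n
        = fdiff m A 1 - fdiff m A (i + 1) := by
      rw [Finset.sum_congr rfl (fun n _ => fdiff_succ m A n), tele]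
    rw [htel, fdiff, fdiff, ← Finset.sum_sub_distrib]

/-- `A ∈ (c^G, C_p^G(Δ_G^m))` iff the rows of `A` are in
`ℓ_1^G` and `B ∈ (c^G, ℓ_p^G)`, stated after taking logarithms
(`α_{nk} = log a_{nk}`, `t_k = log x_k`; `c^G` corresponds to convergent
real sequences). -/
theorem matrix_c_to_CpG (m : ℕ) (hm : 1 ≤ m) (p : ℝ) (hp : 1 ≤ p)
    (α : ℕ → ℕ → ℝ) :
    (∀ t : ℕ → ℝ, (∃ L : ℝ, Filter.Tendsto t Filter.atTop (nhds L)) →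
        (∀ n, 1 ≤ n → Summable (fun k : ℕ => α n (k + 1) * t (k + 1))) ∧
        Summable (fun i : ℕ =>
          |(1 / (i : ℝ)) * ∑ n ∈ Finset.Icc 1 i,
              fdiff m (fun j => ∑' k : ℕ, α j (k + 1) * t (k + 1)) n| ^ p)) ↔
      ((∀ n, 1 ≤ n → Summable (fun k : ℕ => |α n (k + 1)|)) ∧
        ∀ t : ℕ → ℝ, (∃ L : ℝ, Filter.Tendsto t Filter.atTop (nhds L)) →
          (∀ i, 1 ≤ i → Summable (fun k : ℕ => bmat m α i (k + 1) * t (k + 1))) ∧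
          Summable (fun i : ℕ =>
            |∑' k : ℕ, bmat m α (i + 1) (k + 1) * t (k + 1)| ^ p)) := by
  obtain ⟨m, rfl⟩ : ∃ m', m = m' + 1 := ⟨m - 1, by omega⟩
  constructor
  · intro H
    have habs : ∀ n, 1 ≤ n → Summable (fun k : ℕ => |α n (k + 1)|) := by
      intro n hn
      have h1 := (H (fun _ => 1) ⟨1, tendsto_const_nhds⟩).1 n hn
      simp only [mul_one] at h1
      exact (summable_abs_iff).mpr h1
    refine ⟨habs, fun t ht => ?_⟩
    obtain ⟨hrow, hsum⟩ := H t ht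
    have key := fun i hi => keylemma m α t hrow i hi
    refine ⟨fun i hi => (key i hi).1, ?_⟩
    have h2 := (summable_nat_add_iff 1).mpr hsum
    exact h2.congr fun i => by rw [(key (i + 1) (by omega)).2]
  · rintro ⟨habs, H⟩ t ht
    obtain ⟨L, hL⟩ := ht
    obtain ⟨C, hC⟩ : ∃ C : ℝ, ∀ k, |t k| ≤ C := by
      have hb : BddAbove (Set.range fun k => |t k|) := hL.abs.bddAbove_range
      obtain ⟨C, hC⟩ := hb
      exact ⟨C, fun k => hC (Set.mem_range_self k)⟩
    have hrow : ∀ n, 1 ≤ n → Summable (fun k : ℕ => α n (k + 1) * t (k + 1)) := by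
      intro n hn
      rw [← summable_abs_iff]
      refine Summable.of_nonneg_of_le (fun k => abs_nonneg _) (fun k => ?_)
        ((habs n hn).mul_right C)
      rw [abs_mul]
      exact mul_le_mul_of_nonneg_left (hC _) (abs_nonneg _)
    refine ⟨hrow, ?_⟩
    obtain ⟨hBrow, hBsum⟩ := H t ⟨L, hL⟩
    have key := fun i hi => keylemma m α t hrow i hi
    rw [← summable_nat_add_iff 1]
    exact hBsum.congr fun i => by rw [← (key (i + 1) (by omega)).2]
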